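/- Let X be a real Banach space with dim X ≥ 2, F : X → ℝ, f : ℝ → ℝ, x ∈ X, x* ∈ X* and t ∈ ℝ. Assume the one-dimensional modulus ρ_{f,F(x)}^{t}, defined by ρ_{f,s}^{t}(h) = max_{σ ∈ {−1,+1}} |f(s+σh) − f(s) − tσh| for h ≥ 0, is nondecreasing, and assume ρ_{F,x}^{x*}(τ) < ∞. Then for all τ ≥ 0: ρ_{f∘F, x}^{t·x*}(τ) ≤ |t|·ρ_{F,x}^{x*}(τ) + ρ_{f,F(x)}^{t}(‖x*‖τ + ρ_{F,x}^{x*}(τ)). -/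

import Mathlib

open scoped ENNReal

/-- The modulus of smoothness of a normed space `Y`:
`ρ_Y(τ) = sup {(‖x+τy‖+‖x−τy‖)/2 − 1 : x, y ∈ S_Y}`. -/
noncomputable def rhoSpace (Y : Type*) [NormedAddCommGroup Y] [NormedSpace ℝ Y] (τ : ℝ) : ℝ :=
  sSup {r : ℝ | ∃ x y : Y, ‖x‖ = 1 ∧ ‖y‖ = 1 ∧ r = (‖x + τ • y‖ + ‖x - τ • y‖) / 2 - 1}

/-- The modulus of convexity of a normed space `Y`:
`δ_Y(ε) = inf {1 − ‖y+ỹ‖/2 : y, ỹ ∈ S_Y, ‖y−ỹ‖ = ε}`. -/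
noncomputable def deltaSpace (Y : Type*) [NormedAddCommGroup Y] [NormedSpace ℝ Y] (ε : ℝ) : ℝ :=
  sInf {r : ℝ | ∃ y z : Y, ‖y‖ = 1 ∧ ‖z‖ = 1 ∧ ‖y - z‖ = ε ∧ r = 1 - ‖y + z‖ / 2}

/-- `φ` is a subgradient of `F` at `x`: `F(y) ≥ F(x) + ⟨φ, y−x⟩` for all `y`. -/
def IsSubgradient {X : Type*} [NormedAddCommGroup X] [NormedSpace ℝ X]
    (F : X → ℝ) (x : X) (φ : X →L[ℝ] ℝ) : Prop :=
  ∀ y : X, F x + φ (y - x) ≤ F y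

/-- The linearization error (Bregman divergence)
`Δ_F^{φ}(y,x) = F(y) − F(x) − ⟨φ, y−x⟩`. -/
def breg {X : Type*} [NormedAddCommGroup X] [NormedSpace ℝ X]
    (F : X → ℝ) (φ : X →L[ℝ] ℝ) (y x : X) : ℝ :=
  F y - F x - φ (y - x)

/-- The modulus of smoothness of `F` at `x` w.r.t. `φ`, with values in `[0,∞]`:
`ρ_{F,x}^{φ}(τ) = sup {|Δ_F^{φ}(y,x)| : ‖y−x‖ = τ}`. -/
noncomputable def rhoF {X : Type*} [NormedAddCommGroup X] [NormedSpace ℝ X]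
    (F : X → ℝ) (x : X) (φ : X →L[ℝ] ℝ) (τ : ℝ) : ℝ≥0∞ :=
  ⨆ y ∈ {y : X | ‖y - x‖ = τ}, ENNReal.ofReal |breg F φ y x|

/-- The modulus of convexity of `F` at `x` w.r.t. `φ`, with values in `[0,∞]`:
`δ_{F,x}^{φ}(τ) = inf {|Δ_F^{φ}(y,x)| : ‖y−x‖ = τ}`. -/
noncomputable def deltaF {X : Type*} [NormedAddCommGroup X] [NormedSpace ℝ X]
    (F : X → ℝ) (x : X) (φ : X →L[ℝ] ℝ) (τ : ℝ) : ℝ≥0∞ :=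
  ⨅ y ∈ {y : X | ‖y - x‖ = τ}, ENNReal.ofReal |breg F φ y x|

/-- `jp` is a selection of the duality mapping with exponent `p`:
`⟨j_p(x), x⟩ = ‖j_p(x)‖·‖x‖` and `‖j_p(x)‖ = ‖x‖^{p−1}` for every `x`. -/
def IsDualitySelection {X : Type*} [NormedAddCommGroup X] [NormedSpace ℝ X]
    (p : ℝ) (jp : X → X →L[ℝ] ℝ) : Prop :=
  ∀ x : X, jp x x = ‖jp x‖ * ‖x‖ ∧ ‖jp x‖ = ‖x‖ ^ (p - 1)

/-- The one-dimensional modulus of smoothness of `f : ℝ → ℝ` at `s` w.r.t. slope `t`: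
`ρ_{f,s}^{t}(h) = max_{σ ∈ {−1,+1}} |f(s+σh) − f(s) − tσh|`. -/
noncomputable def rho1 (f : ℝ → ℝ) (s t h : ℝ) : ℝ :=
  max |f (s + h) - f s - t * h| |f (s - h) - f s + t * h|

/-- chain rule: if `ρ_{f,F(x)}^{t}` is nondecreasing (on `h ≥ 0`) and
`ρ_{F,x}^{x*}(τ) < ∞`, then
`ρ_{f∘F,x}^{t·x*}(τ) ≤ |t|·ρ_{F,x}^{x*}(τ) + ρ_{f,F(x)}^{t}(‖x*‖τ + ρ_{F,x}^{x*}(τ))`. -/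
theorem stmt7 (X : Type*) [NormedAddCommGroup X] [NormedSpace ℝ X] [CompleteSpace X]
    (hdim : 2 ≤ Module.rank ℝ X)
    (F : X → ℝ) (f : ℝ → ℝ) (x : X) (xs : X →L[ℝ] ℝ) (t : ℝ)
    (hmono : ∀ h₁ h₂ : ℝ, 0 ≤ h₁ → h₁ ≤ h₂ → rho1 f (F x) t h₁ ≤ rho1 f (F x) t h₂) :
    ∀ τ : ℝ, 0 ≤ τ → rhoF F x xs τ ≠ ⊤ →
      rhoF (fun z : X => f (F z)) x (t • xs) τ ≤
        ENNReal.ofReal (|t| * (rhoF F x xs τ).toReal +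
          rho1 f (F x) t (‖xs‖ * τ + (rhoF F x xs τ).toReal)) := by
  intro τ hτ hfin
  set ρ := (rhoF F x xs τ).toReal with hρ
  have hρ0 : 0 ≤ ρ := ENNReal.toReal_nonneg
  refine iSup₂_le fun y hy => ?_
  have hy' : ‖y - x‖ = τ := hy
  have hΔ : |breg F xs y x| ≤ ρ := by
    have h1 : ENNReal.ofReal |breg F xs y x| ≤ rhoF F x xs τ :=
      le_iSup₂_of_le y hy le_rfl
    rwa [ENNReal.ofReal_le_iff_le_toReal hfin] at h1
  set s := F x with hs
  set h := F y - F x with hh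
  have hxs : |xs (y - x)| ≤ ‖xs‖ * τ := by
    calc |xs (y - x)| = ‖xs (y - x)‖ := (Real.norm_eq_abs _).symm
      _ ≤ ‖xs‖ * ‖y - x‖ := xs.le_opNorm _
      _ = ‖xs‖ * τ := by rw [hy']
  have hhb : |h| ≤ ‖xs‖ * τ + ρ := by
    have : h = xs (y - x) + breg F xs y x := by simp [breg, hh]
    calc |h| ≤ |xs (y - x)| + |breg F xs y x| := by rw [this]; exact abs_add_le _ _
      _ ≤ ‖xs‖ * τ + ρ := add_le_add hxs hΔ
  have habs : |f (s + h) - f s - t * h| ≤ rho1 f s t |h| := by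
    rcases le_or_gt 0 h with h0 | h0
    · rw [abs_of_nonneg h0]; exact le_max_left _ _
    · have e : f (s - |h|) - f s + t * |h| = f (s + h) - f s - t * h := by
        rw [abs_of_neg h0, sub_neg_eq_add]; ring
      have e2 : |f (s + h) - f s - t * h| = abs (f (s - |h|) - f s + t * |h|) := by rw [e]
      rw [e2]; exact le_max_right _ _
  have hfy : s + h = F y := by rw [hs, hh]; ring
  have key : |f (F y) - f (F x) - (t • xs) (y - x)| ≤
      |t| * ρ + rho1 f (F x) t (‖xs‖ * τ + ρ) := by
    have split : f (F y) - f (F x) - (t • xs) (y - x) =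
        (f (s + h) - f s - t * h) + t * breg F xs y x := by
      rw [hfy]
      simp only [ContinuousLinearMap.smul_apply, smul_eq_mul, breg, hh, hs]
      ring
    calc |f (F y) - f (F x) - (t • xs) (y - x)|
        ≤ |f (s + h) - f s - t * h| + |t * breg F xs y x| := by
          rw [split]; exact abs_add_le _ _
      _ ≤ rho1 f s t |h| + |t| * ρ := by
          rw [abs_mul]
          exact add_le_add habs (mul_le_mul_of_nonneg_left hΔ (abs_nonneg t))
      _ ≤ rho1 f (F x) t (‖xs‖ * τ + ρ) + |t| * ρ := by
          rw [hs]
          exact add_le_add_left (hmono _ _ (abs_nonneg h) hhb) _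
      _ = |t| * ρ + rho1 f (F x) t (‖xs‖ * τ + ρ) := by ring
  exact ENNReal.ofReal_le_ofReal key
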